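/- Let N be a binomial random variable with parameters M = ⌈e^{nR}⌉ and success probability p_n with (1/n) log p_n → −I as n → ∞, where I > 0, R > 0. For a threshold u ≤ 0 (so the event is {N ≥ 1}): Pr{N ≥ 1} has exponential rate [I − R]_+, i.e., −(1/n) log Pr{N ≥ 1} → max{I − R, 0}. -/

import Mathlib

open Filter

lemma aux_one_sub_exp (x : ℝ) (hx : 0 ≤ x) :
    Real.exp (-1) * min x 1 ≤ 1 - Real.exp (-x) := by
  have hmul : Real.exp (-x) * Real.exp x = 1 := by rw [← Real.exp_add]; simp
  rcases le_total x 1 with h | h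
  · rw [min_eq_left h]
    have h1 : Real.exp (-1) ≤ Real.exp (-x) := Real.exp_le_exp.mpr (by linarith)
    have h2 := Real.add_one_le_exp x
    nlinarith [Real.exp_pos (-x)]
  · rw [min_eq_right h]
    have h1 : Real.exp (-x) ≤ Real.exp (-1) := Real.exp_le_exp.mpr (by linarith)
    have h2 := Real.add_one_le_exp (1 : ℝ)
    have h3 : Real.exp (-1) * Real.exp 1 = 1 := by rw [← Real.exp_add]; simp
    nlinarith [Real.exp_pos (-1)]

/-- Let `N ~ Binomial(M, p_n)` with `M = ⌈e^{nR}⌉` and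
`(1/n) log p_n → −I`, `I > 0`, `R > 0`.  Then `Pr{N ≥ 1} = 1 − (1 − p_n)^M`
has exponential rate `[I − R]₊`, i.e. `−(1/n) log Pr{N ≥ 1} → max{I − R, 0}`. -/
theorem stmt6 (R I : ℝ) (hR : 0 < R) (hI : 0 < I)
    (p : ℕ → ℝ) (hp : ∀ n, 0 < p n) (hp1 : ∀ n, p n ≤ 1)
    (hplog : Tendsto (fun n : ℕ => Real.log (p n) / n) atTop (nhds (-I)))
    (M : ℕ → ℕ) (hM : ∀ n, M n = ⌈Real.exp (n * R)⌉₊) :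
    Tendsto (fun n : ℕ => -(Real.log (1 - (1 - p n) ^ (M n))) / n)
      atTop (nhds (max (I - R) 0)) := by
  set a : ℕ → ℝ := fun n => min ((M n : ℝ) * p n) 1 with ha
  have hM1 : ∀ n, 1 ≤ M n := by
    intro n; rw [hM]; exact Nat.one_le_ceil_iff.mpr (Real.exp_pos _)
  have hMpos : ∀ n, (0 : ℝ) < (M n : ℝ) := by
    intro n; exact_mod_cast hM1 n
  have hapos : ∀ n, 0 < a n := fun n => lt_min (mul_pos (hMpos n) (hp n)) one_pos
  -- upper bound: 1 - (1-p)^M ≤ a n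
  have hub : ∀ n, 1 - (1 - p n) ^ (M n) ≤ a n := by
    intro n
    refine le_min ?_ ?_
    · have := one_add_mul_le_pow (a := -(p n)) (by linarith [hp1 n]) (M n)
      have h2 : (1 : ℝ) + (M n : ℝ) * (-(p n)) ≤ (1 - p n) ^ (M n) := by
        simpa [sub_eq_add_neg] using this
      linarith
    · have : (0:ℝ) ≤ (1 - p n) ^ (M n) := pow_nonneg (by linarith [hp1 n]) _
      linarith
  -- lower bound: exp(-1) * a n ≤ 1 - (1-p)^M
  have hlb : ∀ n, Real.exp (-1) * a n ≤ 1 - (1 - p n) ^ (M n) := by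
    intro n
    have h0 : 1 - p n ≤ Real.exp (-(p n)) := by
      have := Real.add_one_le_exp (-(p n)); linarith
    have h1 : (1 - p n) ^ (M n) ≤ Real.exp (-((M n : ℝ) * p n)) := by
      calc (1 - p n) ^ (M n) ≤ (Real.exp (-(p n))) ^ (M n) :=
            pow_le_pow_left₀ (by linarith [hp1 n]) h0 _
        _ = Real.exp (-((M n : ℝ) * p n)) := by
            rw [← Real.exp_nat_mul]; ring_nf
    have h2 := aux_one_sub_exp ((M n : ℝ) * p n) (le_of_lt (mul_pos (hMpos n) (hp n)))
    have h3 : min ((M n : ℝ) * p n) 1 = a n := rfl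
    rw [h3] at h2
    linarith
  have hxpos : ∀ n, 0 < 1 - (1 - p n) ^ (M n) := by
    intro n
    have := hlb n
    nlinarith [Real.exp_pos (-1 : ℝ), hapos n]
  have hxle1 : ∀ n, 1 - (1 - p n) ^ (M n) ≤ 1 := by
    intro n
    have : (0:ℝ) ≤ (1 - p n) ^ (M n) := pow_nonneg (by linarith [hp1 n]) _
    linarith
  -- log M / n → R
  have hlogM : Tendsto (fun n : ℕ => Real.log (M n) / n) atTop (nhds R) := by
    have hlow : ∀ n : ℕ, 1 ≤ n → R ≤ Real.log (M n) / n := by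
      intro n hn
      have hn' : (0:ℝ) < n := by exact_mod_cast hn
      have : Real.exp (n * R) ≤ (M n : ℝ) := by rw [hM]; exact Nat.le_ceil _
      have hlog : (n : ℝ) * R ≤ Real.log (M n) := by
        have := Real.log_le_log (Real.exp_pos _) this
        rwa [Real.log_exp] at this
      rw [le_div_iff₀ hn']
      linarith
    have hhigh : ∀ n : ℕ, 1 ≤ n → Real.log (M n) / n ≤ R + 1 / n := by
      intro n hn
      have hn' : (0:ℝ) < n := by exact_mod_cast hn
      have h1 : (M n : ℝ) ≤ Real.exp (n * R) + 1 := by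
        rw [hM]
        have := Nat.ceil_lt_add_one (le_of_lt (Real.exp_pos ((n:ℝ) * R)))
        linarith
      have h2 : Real.exp ((n:ℝ) * R) + 1 ≤ Real.exp ((n:ℝ) * R + 1) := by
        rw [Real.exp_add]
        have he1 : (1:ℝ) ≤ Real.exp ((n:ℝ)*R) :=
          Real.one_le_exp (by positivity)
        have he2 : (2:ℝ) ≤ Real.exp 1 := by
          have := Real.add_one_le_exp (1:ℝ); linarith
        nlinarith
      have hlog : Real.log (M n) ≤ (n:ℝ) * R + 1 := by
        have := Real.log_le_log (hMpos n) (le_trans h1 h2)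
        rwa [Real.log_exp] at this
      rw [div_le_iff₀ hn']
      have : (R + 1/n) * n = n * R + 1 := by field_simp
      rw [this]; exact hlog
    have hup : Tendsto (fun n : ℕ => R + 1 / n) atTop (nhds R) := by
      have : Tendsto (fun n : ℕ => R + 1 / n) atTop (nhds (R + 0)) :=
        tendsto_const_nhds.add tendsto_one_div_atTop_nhds_zero_nat
      simpa using this
    refine tendsto_of_tendsto_of_tendsto_of_le_of_le' tendsto_const_nhds hup ?_ ?_
    · filter_upwards [eventually_ge_atTop 1] with n hn using hlow n hn
    · filter_upwards [eventually_ge_atTop 1] with n hn using hhigh n hn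
  -- -log(Mp)/n → I - R
  have hMp : Tendsto (fun n : ℕ => -(Real.log ((M n : ℝ) * p n)) / n)
      atTop (nhds (I - R)) := by
    have heq : ∀ n : ℕ, -(Real.log ((M n : ℝ) * p n)) / n
        = -(Real.log (M n) / n) - Real.log (p n) / n := by
      intro n
      rw [Real.log_mul (ne_of_gt (hMpos n)) (ne_of_gt (hp n))]
      ring
    have : Tendsto (fun n : ℕ => -(Real.log (M n) / n) - Real.log (p n) / n)
        atTop (nhds (-R - (-I))) := (hlogM.neg).sub hplog
    have h2 : -R - (-I) = I - R := by ring
    rw [h2] at this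
    exact this.congr (fun n => (heq n).symm)
  set L : ℕ → ℝ := fun n => max (-(Real.log ((M n : ℝ) * p n))) 0 with hL
  have key : ∀ n, -(Real.log (a n)) = L n := by
    intro n
    rcases le_total ((M n : ℝ) * p n) 1 with h | h
    · have h1 : a n = (M n : ℝ) * p n := min_eq_left h
      have h2 : Real.log ((M n : ℝ) * p n) ≤ 0 :=
        Real.log_nonpos (le_of_lt (mul_pos (hMpos n) (hp n))) h
      rw [h1, hL]
      simp [max_eq_left (by linarith : (0:ℝ) ≤ -(Real.log ((M n : ℝ) * p n)))]
    · have h1 : a n = 1 := min_eq_right h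
      have h2 : 0 ≤ Real.log ((M n : ℝ) * p n) := Real.log_nonneg h
      rw [h1, hL]
      simp [max_eq_right (by linarith : -(Real.log ((M n : ℝ) * p n)) ≤ (0:ℝ))]
  -- L n / n → max (I-R) 0
  have hLn : Tendsto (fun n : ℕ => L n / n) atTop (nhds (max (I - R) 0)) := by
    have h1 : Tendsto (fun n : ℕ => max (-(Real.log ((M n : ℝ) * p n)) / n) 0)
        atTop (nhds (max (I - R) 0)) := hMp.max tendsto_const_nhds
    refine h1.congr' ?_
    filter_upwards [eventually_ge_atTop 1] with n hn
    have hn' : (0:ℝ) < n := by exact_mod_cast hn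
    show max (-(Real.log ((M n : ℝ) * p n)) / n) 0
        = max (-(Real.log ((M n : ℝ) * p n))) 0 / n
    rcases le_total (-(Real.log ((M n : ℝ) * p n))) 0 with h | h
    · rw [max_eq_right h, max_eq_right (div_nonpos_of_nonpos_of_nonneg h (le_of_lt hn'))]
      simp
    · rw [max_eq_left h, max_eq_left (div_nonneg h (le_of_lt hn'))]
  have hLn' : Tendsto (fun n : ℕ => L n / n + 1 / n) atTop (nhds (max (I - R) 0)) := by
    have := hLn.add tendsto_one_div_atTop_nhds_zero_nat
    simpa using this
  refine tendsto_of_tendsto_of_tendsto_of_le_of_le' hLn hLn' ?_ ?_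
  · -- L n / n ≤ -log x / n
    filter_upwards [eventually_ge_atTop 1] with n hn
    have hn' : (0:ℝ) < n := by exact_mod_cast hn
    have hxa : Real.log (1 - (1 - p n) ^ (M n)) ≤ Real.log (a n) :=
      Real.log_le_log (hxpos n) (hub n)
    have hm : L n ≤ -(Real.log (1 - (1 - p n) ^ (M n))) := by
      rw [← key n]; linarith
    exact (div_le_div_iff_of_pos_right hn').mpr hm
  · -- -log x / n ≤ L n / n + 1/n
    filter_upwards [eventually_ge_atTop 1] with n hn
    have hn' : (0:ℝ) < n := by exact_mod_cast hn
    have hlog : Real.log (Real.exp (-1) * a n) ≤ Real.log (1 - (1 - p n) ^ (M n)) :=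
      Real.log_le_log (mul_pos (Real.exp_pos _) (hapos n)) (hlb n)
    have hlm : Real.log (Real.exp (-1) * a n) = -1 + Real.log (a n) := by
      rw [Real.log_mul (ne_of_gt (Real.exp_pos _)) (ne_of_gt (hapos n)), Real.log_exp]
    have h1 : -(Real.log (1 - (1 - p n) ^ (M n))) ≤ L n + 1 := by
      rw [← key n]; rw [hlm] at hlog; linarith
    have h2 : -(Real.log (1 - (1 - p n) ^ (M n))) / n ≤ (L n + 1) / n :=
      (div_le_div_iff_of_pos_right hn').mpr h1
    rw [add_div] at h2
    exact h2
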